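/- For n ≥ 4 and any 4-element subset J of V = {0,…,n-1}, the matrix A^J(n) indexed by even permutations of V — with entries A^J_{η,η'} = 2 if η = η' or η⁻¹η' is a product of two disjoint 2-cycles with all entries in J, -1 if η⁻¹η' is a 3-cycle with entries in J, and 0 otherwise — is positive semi-definite. -/

import Mathlib

open Equiv Matrix Finset

/-- The matrix `A^J(n)` on the alternating group of `Fin n`: entry `2` if `η⁻¹η'` is the
identity or a product of two disjoint 2-cycles with all entries in `J`, `-1` if `η⁻¹η'`
is a 3-cycle with entries in `J`, and `0` otherwise. -/
noncomputable def matAJ (n : ℕ) (J : Finset (Fin n)) :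
    Matrix (alternatingGroup (Fin n)) (alternatingGroup (Fin n)) ℝ :=
  fun η η' =>
    if (η⁻¹ * η' : Perm (Fin n)) = 1 ∨
        ((η⁻¹ * η' : Perm (Fin n)).cycleType = {2, 2} ∧
          (η⁻¹ * η' : Perm (Fin n)).support ⊆ J) then 2
    else if (η⁻¹ * η' : Perm (Fin n)).cycleType = {3} ∧
        (η⁻¹ * η' : Perm (Fin n)).support ⊆ J then -1
    else 0

/-! ### Auxiliary material -/

/-- Computable version of the profile function on `Perm (Fin 4)`. -/
private def f4c (σ : Perm (Fin 4)) : ℤ :=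
  if σ.support.card = 0 ∨ (σ.support.card = 4 ∧ σ * σ = 1) then 2
  else if σ.support.card = 3 then -1 else 0

set_option maxRecDepth 100000 in
set_option maxHeartbeats 1000000 in
private theorem key4c : ∀ τ : Perm (Fin 4),
    (∑ σ : Perm (Fin 4), f4c σ * f4c (σ⁻¹ * τ)) = 12 * f4c τ := by decide

private theorem cycleType_pair_iff {α : Type*} [Fintype α] [DecidableEq α] (σ : Perm α) :
    σ.cycleType = {2, 2} ↔ σ.support.card = 4 ∧ σ * σ = 1 := by
  constructor
  · intro h
    constructor
    · rw [← Equiv.Perm.sum_cycleType, h]; rfl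
    · have ho : orderOf σ = 2 := by
        rw [← Equiv.Perm.lcm_cycleType, h]; rfl
      calc σ * σ = σ ^ 2 := (sq σ).symm
      _ = 1 := by rw [← ho]; exact pow_orderOf_eq_one σ
  · rintro ⟨h4, h2⟩
    have hne : σ ≠ 1 := by
      intro h; rw [h] at h4; simp at h4
    have ho : orderOf σ = 2 := orderOf_eq_prime (by rwa [sq]) hne
    have hall : ∀ m ∈ σ.cycleType, m = 2 := by
      intro m hm
      have hd : m ∣ 2 := by
        rw [← ho, ← Equiv.Perm.lcm_cycleType]; exact Multiset.dvd_lcm hm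
      exact le_antisymm (Nat.le_of_dvd two_pos hd) (Equiv.Perm.two_le_of_mem_cycleType hm)
    have hrep : σ.cycleType = Multiset.replicate (Multiset.card σ.cycleType) 2 :=
      Multiset.eq_replicate_card.mpr hall
    have hsum : σ.cycleType.sum = 4 := by rw [Equiv.Perm.sum_cycleType]; exact h4
    rw [hrep, Multiset.sum_replicate, smul_eq_mul] at hsum
    have hcard : Multiset.card σ.cycleType = 2 := by omega
    rw [hrep, hcard]; rfl

private theorem cycleType_three_iff {α : Type*} [Fintype α] [DecidableEq α] (σ : Perm α) :
    σ.cycleType = {3} ↔ σ.support.card = 3 :=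
  Iff.symm card_support_eq_three_iff

/-- The profile function on `Perm (Fin 4)` defined via cycle types. -/
private def f4 (σ : Perm (Fin 4)) : ℤ :=
  if σ = 1 ∨ σ.cycleType = {2, 2} then 2
  else if σ.cycleType = {3} then -1 else 0

private theorem f4_eq_f4c (σ : Perm (Fin 4)) : f4 σ = f4c σ := by
  unfold f4 f4c
  simp only [cycleType_pair_iff, cycleType_three_iff,
    show (σ = 1) ↔ (σ.support.card = 0) from
      (by rw [← Equiv.Perm.support_eq_empty_iff, Finset.card_eq_zero])]

private theorem key4 : ∀ τ : Perm (Fin 4),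
    (∑ σ : Perm (Fin 4), f4 σ * f4 (σ⁻¹ * τ)) = 12 * f4 τ := by
  intro τ
  simp only [f4_eq_f4c]
  exact key4c τ

/-- The profile function on `Perm (Fin n)`. -/
private noncomputable def hf (n : ℕ) (J : Finset (Fin n)) (π : Perm (Fin n)) : ℝ :=
  if π = 1 ∨ (π.cycleType = {2, 2} ∧ π.support ⊆ J) then 2
  else if π.cycleType = {3} ∧ π.support ⊆ J then -1 else 0

private theorem hf_support {n : ℕ} {J : Finset (Fin n)} {π : Perm (Fin n)}
    (h : hf n J π ≠ 0) : π.support ⊆ J := by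
  unfold hf at h
  split_ifs at h with h1 h2
  · rcases h1 with rfl | ⟨_, hs⟩
    · simp
    · exact hs
  · exact h2.2
  · exact absurd rfl h

private theorem hf_even {n : ℕ} {J : Finset (Fin n)} {π : Perm (Fin n)}
    (h : hf n J π ≠ 0) : π ∈ alternatingGroup (Fin n) := by
  unfold hf at h
  split_ifs at h with h1 h2
  · rcases h1 with rfl | ⟨hc, _⟩
    · exact one_mem _
    · rw [Equiv.Perm.mem_alternatingGroup, Equiv.Perm.sign_of_cycleType, hc]; rfl
  · rw [Equiv.Perm.mem_alternatingGroup, Equiv.Perm.sign_of_cycleType, h2.1]; rfl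
  · exact absurd rfl h

private theorem support_extend_subset {n : ℕ} {J : Finset (Fin n)}
    (e : Fin 4 ≃ {x : Fin n // x ∈ J}) (σ : Perm (Fin 4)) :
    (σ.extendDomain e).support ⊆ J := by
  intro x hx
  simp only [Equiv.Perm.support_extend_domain, Finset.mem_map, Equiv.asEmbedding,
    Function.Embedding.coeFn_mk, Function.comp_apply] at hx
  obtain ⟨a, -, rfl⟩ := hx
  simpa using (e (σ a)).2

private theorem hf_extend {n : ℕ} {J : Finset (Fin n)}
    (e : Fin 4 ≃ {x : Fin n // x ∈ J}) (σ : Perm (Fin 4)) :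
    hf n J (σ.extendDomain e) = (f4 σ : ℝ) := by
  have hsupp : (σ.extendDomain e).support ⊆ J := support_extend_subset e σ
  unfold hf f4
  rw [Equiv.Perm.cycleType_extendDomain]
  simp only [Equiv.Perm.extendDomain_eq_one_iff, hsupp, and_true]
  split_ifs <;> norm_num

private theorem exists_extend {n : ℕ} {J : Finset (Fin n)}
    (e : Fin 4 ≃ {x : Fin n // x ∈ J}) {g : Perm (Fin n)} (hg : g.support ⊆ J) :
    ∃ σ : Perm (Fin 4), σ.extendDomain e = g := by
  have hmem : ∀ x : Fin n, x ∈ J ↔ g x ∈ J := by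
    intro x
    constructor
    · intro hx
      by_cases h : g x = x
      · rwa [h]
      · exact hg (Equiv.Perm.apply_mem_support.mpr (Equiv.Perm.mem_support.mpr h))
    · intro hx
      by_cases h : g x = x
      · rwa [← h]
      · exact hg (Equiv.Perm.mem_support.mpr h)
  refine ⟨e.symm.permCongr (g.subtypePerm fun x => (hmem x).symm), ?_⟩
  apply Equiv.ext
  intro x
  by_cases hx : x ∈ J
  · rw [Equiv.Perm.extendDomain_apply_subtype _ e hx]
    simp [Equiv.Perm.subtypePerm_apply]
  · rw [Equiv.Perm.extendDomain_apply_not_subtype _ e hx]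
    exact (Equiv.Perm.notMem_support.mp fun h => hx (hg h)).symm

private theorem hf_conv {n : ℕ} {J : Finset (Fin n)} (hJ : J.card = 4) (π : Perm (Fin n)) :
    (∑ g : alternatingGroup (Fin n), hf n J ↑g * hf n J ((↑g)⁻¹ * π)) = 12 * hf n J π := by
  classical
  obtain ⟨e⟩ : Nonempty (Fin 4 ≃ {x : Fin n // x ∈ J}) := ⟨(J.equivFinOfCardEq hJ).symm⟩
  set F : Perm (Fin n) → ℝ := fun g => hf n J g * hf n J (g⁻¹ * π) with hF
  have hFzero : ∀ g : Perm (Fin n), hf n J g = 0 → F g = 0 := by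
    intro g h; rw [hF]; simp [h]
  have step1 : (∑ g : alternatingGroup (Fin n), F ↑g) = ∑ g : Perm (Fin n), F g := by
    rw [← Finset.sum_subtype (Finset.univ.filter (· ∈ alternatingGroup (Fin n)))
      (fun x => by simp) F, Finset.sum_filter]
    refine Finset.sum_congr rfl fun g _ => ?_
    by_cases hg : g ∈ alternatingGroup (Fin n)
    · simp [hg]
    · rw [if_neg hg]
      refine (hFzero g ?_).symm
      by_contra h
      exact hg (hf_even h)
  have hinj : Function.Injective fun σ : Perm (Fin 4) => σ.extendDomain e := by
    intro a b hab
    exact Equiv.Perm.extendDomainHom_injective e hab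
  have himg : (∑ σ : Perm (Fin 4), F (σ.extendDomain e)) =
      ∑ g ∈ Finset.univ.image (fun σ : Perm (Fin 4) => σ.extendDomain e), F g :=
    (Finset.sum_image fun a _ b _ hab => hinj hab).symm
  have step2 : (∑ g : Perm (Fin n), F g) = ∑ σ : Perm (Fin 4), F (σ.extendDomain e) := by
    rw [himg]
    refine (Finset.sum_subset (Finset.subset_univ _) fun g _ hg => ?_).symm
    refine hFzero g ?_
    by_contra h
    refine hg ?_
    obtain ⟨σ, hσ⟩ := exists_extend e (hf_support h)
    exact Finset.mem_image.mpr ⟨σ, Finset.mem_univ _, hσ⟩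
  rw [step1, step2]
  by_cases hπ : π.support ⊆ J
  · obtain ⟨τ, rfl⟩ := exists_extend e hπ
    have hterm : ∀ σ : Perm (Fin 4),
        F (σ.extendDomain e) = (f4 σ : ℝ) * (f4 (σ⁻¹ * τ) : ℝ) := by
      intro σ
      rw [hF]
      simp only
      rw [hf_extend e, Equiv.Perm.extendDomain_inv, Equiv.Perm.extendDomain_mul,
        hf_extend e]
    rw [Finset.sum_congr rfl fun σ _ => hterm σ, hf_extend e]
    exact_mod_cast key4 τ
  · have hzero : ∀ σ : Perm (Fin 4), F (σ.extendDomain e) = 0 := by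
      intro σ
      rw [hF]
      simp only
      have h2 : hf n J ((σ.extendDomain e)⁻¹ * π) = 0 := by
        by_contra h
        refine hπ ?_
        have hdecomp : π = (σ.extendDomain e) * ((σ.extendDomain e)⁻¹ * π) := by group
        rw [hdecomp]
        refine (Equiv.Perm.support_mul_le _ _).trans (sup_le ?_ ?_)
        · exact support_extend_subset e σ
        · exact hf_support h
      rw [h2, mul_zero]
    have hπ0 : hf n J π = 0 := by
      by_contra h; exact hπ (hf_support h)
    rw [Finset.sum_congr rfl fun σ _ => hzero σ, hπ0]
    simp

private theorem matAJ_eq_hf (n : ℕ) (J : Finset (Fin n))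
    (η η' : alternatingGroup (Fin n)) :
    matAJ n J η η' = hf n J ((η : Perm (Fin n))⁻¹ * η') :=
  rfl

private theorem hf_inv (n : ℕ) (J : Finset (Fin n)) (π : Perm (Fin n)) :
    hf n J π⁻¹ = hf n J π := by
  unfold hf
  simp only [Equiv.Perm.cycleType_inv, Equiv.Perm.support_inv, inv_eq_one]

private theorem matAJ_isHermitian (n : ℕ) (J : Finset (Fin n)) :
    (matAJ n J).IsHermitian := by
  refine Matrix.IsHermitian.ext fun η η' => ?_
  simp only [RCLike.star_def, starRingEnd_apply, star_trivial]
  rw [matAJ_eq_hf, matAJ_eq_hf, ← hf_inv]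
  congr 1

private theorem matAJ_sq (n : ℕ) (J : Finset (Fin n)) (hJ : J.card = 4) :
    matAJ n J * matAJ n J = (12 : ℝ) • matAJ n J := by
  ext η η'
  rw [Matrix.mul_apply, Matrix.smul_apply, smul_eq_mul, matAJ_eq_hf]
  rw [← hf_conv hJ ((η : Perm (Fin n))⁻¹ * η')]
  refine Fintype.sum_equiv (Equiv.mulLeft η⁻¹) _ _ fun k => ?_
  rw [matAJ_eq_hf, matAJ_eq_hf]
  simp only [Equiv.coe_mulLeft, Subgroup.coe_mul, InvMemClass.coe_inv]
  congr 1
  congr 1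
  group

/-- For `n ≥ 4` and any 4-element subset `J` of `{0,…,n-1}`, the matrix `A^J(n)` is
positive semi-definite. -/
theorem matAJ_posSemidef (n : ℕ) (hn : 4 ≤ n) (J : Finset (Fin n)) (hJ : J.card = 4) :
    (matAJ n J).PosSemidef := by
  have hH := matAJ_isHermitian n J
  have hsq := matAJ_sq n J hJ
  have hc : (Real.sqrt 12)⁻¹ * (Real.sqrt 12)⁻¹ = (12 : ℝ)⁻¹ := by
    rw [← mul_inv, Real.mul_self_sqrt (by norm_num)]
  have key : matAJ n J =
      ((Real.sqrt 12)⁻¹ • matAJ n J)ᴴ * ((Real.sqrt 12)⁻¹ • matAJ n J) := by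
    rw [Matrix.conjTranspose_smul, star_trivial, hH.eq, Matrix.smul_mul, Matrix.mul_smul,
      hsq, smul_smul, smul_smul, hc]
    norm_num
  rw [key]
  exact Matrix.posSemidef_conjTranspose_mul_self _
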